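/- Let R be a commutative ring, S an R-algebra, M a left S-module, and χ : R → End_S(M) the canonical ring homomorphism sending r to scalar multiplication by r. The following are equivalent: (1) there exists an R-linear map E : End_S(M) → R such that χ(E(g)) = g for all g ∈ End_S(M); (2) there exists an idempotent e ∈ R such that χ is surjective and, for every r ∈ R, χ(r) = 0 if and only if r·e = 0 (so that χ induces a ring isomorphism Re ≅ End_S(M) and χ is identified with the projection r ↦ r·e). -/

import Mathlib

variable (R S M : Type*) [CommRing R] [Ring S] [Algebra R S]
  [AddCommGroup M] [Module S M] [Module R M] [IsScalarTower R S M] [SMulCommClass R S M]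

instance : SMulCommClass S R M := SMulCommClass.symm R S M

/-- For the canonical ring homomorphism `χ : R →+* End_S(M)`, having an `R`-linear section is
equivalent to the existence of an idempotent `e ∈ R` such that `χ` is surjective with kernel
the annihilator of `e`, i.e. `χ` is identified with the projection `R → Re`. -/
theorem end_section_iff_idempotent :
    (∃ E : Module.End S M →ₗ[R] R,
        ∀ g : Module.End S M, Module.toModuleEnd S M (E g) = g) ↔
    (∃ e : R, e * e = e ∧ Function.Surjective (Module.toModuleEnd S M (S := R)) ∧
        ∀ r : R, Module.toModuleEnd S M r = 0 ↔ r * e = 0) := by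
  set χ := Module.toModuleEnd S M (S := R) with hχ
  have hsmul : ∀ (r : R) (g : Module.End S M), r • g = χ r * g := by
    intro r g
    ext m
    simp [χ, Module.toModuleEnd, DistribMulAction.toLinearMap, DistribSMul.toLinearMap, Module.End.mul_apply]
    rfl
  have hsmul1 : ∀ r : R, r • (1 : Module.End S M) = χ r := by
    intro r; rw [hsmul, mul_one]
  constructor
  · rintro ⟨E, hE⟩
    set a := E 1 with ha
    -- key : χ (r * a) = χ r
    have key : ∀ r : R, χ (r * a) = χ r := by
      intro r
      have h1 : r * a = E (r • (1 : Module.End S M)) := by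
        rw [map_smul, smul_eq_mul, ha]
      rw [h1, hE, hsmul1]
    -- section property: r * a = E (χ r)
    have hsec : ∀ r : R, r * a = E (χ r) := by
      intro r
      rw [← hsmul1, map_smul, smul_eq_mul, ha]
    have haa : a * a * a = a * a := by
      have := key a
      calc a * a * a = E (χ (a * a)) := hsec _
        _ = E (χ a) := by rw [this]
        _ = a * a := (hsec a).symm
    refine ⟨a * a, ?_, ?_, ?_⟩
    · rw [← mul_assoc, haa, haa]
    · intro g
      exact ⟨E g, hE g⟩
    · intro r
      constructor
      · intro hr
        have : r * a = E (χ r) := hsec r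
        rw [hr, map_zero] at this
        rw [← mul_assoc, this, zero_mul]
      · intro hr
        have : χ r = χ (r * (a * a)) := by
          rw [← mul_assoc, key, key]
        rw [this, hr, map_zero]
  · rintro ⟨e, he, hsurj, hker⟩
    have hsame : ∀ r r' : R, χ r = χ r' → r * e = r' * e := by
      intro r r' h
      have : (r - r') * e = 0 := (hker _).mp (by rw [map_sub, h, sub_self])
      rw [sub_mul, sub_eq_zero] at this
      exact this
    have hre : ∀ r : R, χ (r * e) = χ r := by
      intro r
      have : (r * e - r) * e = 0 := by
        rw [sub_mul, mul_assoc, he, sub_self]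
      have h0 : χ (r * e - r) = 0 := (hker _).mpr this
      rw [map_sub, sub_eq_zero] at h0
      exact h0
    set inv := Function.surjInv hsurj with hinv
    have hinv_spec : ∀ g, χ (inv g) = g := Function.surjInv_eq hsurj
    refine ⟨{ toFun := fun g => inv g * e,
              map_add' := ?_,
              map_smul' := ?_ }, ?_⟩
    · intro g g'
      show inv (g + g') * e = inv g * e + inv g' * e
      rw [← add_mul]
      apply hsame
      rw [hinv_spec, map_add, hinv_spec, hinv_spec]
    · intro c g
      simp only [RingHom.id_apply]
      show inv (c • g) * e = c • (inv g * e)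
      have : χ (inv (c • g)) = χ (c * inv g) := by
        rw [hinv_spec, map_mul, hinv_spec, ← hsmul]
      have h2 := hsame _ _ this
      rw [h2, smul_eq_mul, mul_assoc]
    · intro g
      show χ (inv g * e) = g
      rw [hre, hinv_spec]
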